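/- For barcodes f and g, if C(f^∧p) = C(g^∧p) for every integer p ≥ 1, then f = g. In other words, the map sending a barcode f to its exterior critical series (the family of critical series of all its exterior powers) is one-to-one. -/

import Mathlib

noncomputable section

/-- A barcode: a finite multiset of bars `(α, ℓ)` with positive lifespan `ℓ`. -/
def IsBarcode (f : Multiset (ℝ × ℝ)) : Prop := ∀ b ∈ f, (0 : ℝ) < b.2

/-- The `p`-th exterior power of a barcode: each `p`-element sub-multiset `s`
contributes the bar whose birth grade is the sum of the birth grades in `s`
and whose lifespan is the minimum of the lifespans in `s`. -/
noncomputable def extPow (f : Multiset (ℝ × ℝ)) (p : ℕ) : Multiset (ℝ × ℝ) :=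
  (Multiset.powersetCard p f).map
    (fun s => ((s.map Prod.fst).sum, sInf {x : ℝ | x ∈ s.map Prod.snd}))

/-- The birth series `B(f) = Σ_{(α,ℓ)∈f} x^α`. -/
noncomputable def birthSeries (f : Multiset (ℝ × ℝ)) : ℝ →₀ ℤ :=
  (f.map (fun b => Finsupp.single b.1 (1 : ℤ))).sum

/-- The death series `D(f) = Σ_{(α,ℓ)∈f} x^{α+ℓ}`. -/
noncomputable def deathSeries (f : Multiset (ℝ × ℝ)) : ℝ →₀ ℤ :=
  (f.map (fun b => Finsupp.single (b.1 + b.2) (1 : ℤ))).sum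

/-- The critical series `C(f) = B(f) − D(f)`. -/
noncomputable def critSeries (f : Multiset (ℝ × ℝ)) : ℝ →₀ ℤ :=
  birthSeries f - deathSeries f

/-- The lifespan series `L(f) = Σ_{(α,ℓ)∈f} x^ℓ`. -/
noncomputable def lifespanSeries (f : Multiset (ℝ × ℝ)) : ℝ →₀ ℤ :=
  (f.map (fun b => Finsupp.single b.2 (1 : ℤ))).sum

/-- The drift `Δ(f) = Σ_{(α,ℓ)∈f} α`. -/
noncomputable def drift (f : Multiset (ℝ × ℝ)) : ℝ :=
  (f.map Prod.fst).sum

/-- The moment `μ(P) = Σ_β P(β)·β`. -/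
noncomputable def moment (P : ℝ →₀ ℤ) : ℝ :=
  P.sum fun β n => (n : ℝ) * β

/-- The second moment `μ₂(P) = Σ_β P(β)·β²`. -/
noncomputable def moment2 (P : ℝ →₀ ℤ) : ℝ :=
  P.sum fun β n => (n : ℝ) * β ^ 2

end


open scoped Classical

namespace ECSaux

/-- minimum of a multiset of reals (junk `0` for the empty multiset) -/
noncomputable def mm (m : Multiset ℝ) : ℝ := sInf {x | x ∈ m}

lemma memset_finite (m : Multiset ℝ) : {x | x ∈ m}.Finite := by
  have : {x | x ∈ m} = ↑m.toFinset := by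
    ext x; simp [Multiset.mem_toFinset]
  rw [this]; exact m.toFinset.finite_toSet

lemma mm_le {m : Multiset ℝ} {x : ℝ} (hx : x ∈ m) : mm m ≤ x :=
  csInf_le (memset_finite m).bddBelow hx

lemma mm_mem {m : Multiset ℝ} (h : m ≠ 0) : mm m ∈ m := by
  have hne : {x | x ∈ m}.Nonempty := by
    obtain ⟨x, hx⟩ := Multiset.exists_mem_of_ne_zero h
    exact ⟨x, hx⟩
  exact hne.csInf_mem (memset_finite m)

lemma le_mm {m : Multiset ℝ} {u : ℝ} (h : m ≠ 0) (hu : ∀ x ∈ m, u ≤ x) : u ≤ mm m :=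
  le_csInf (by obtain ⟨x, hx⟩ := Multiset.exists_mem_of_ne_zero h; exact ⟨x, hx⟩) hu

/-- sum of finsupp singles over a multiset -/
noncomputable def SS {γ : Type*} (m : Multiset γ) (ψ : γ → ℝ) : ℝ →₀ ℤ :=
  (m.map (fun a => Finsupp.single (ψ a) (1 : ℤ))).sum

lemma SS_zero {γ : Type*} (ψ : γ → ℝ) : SS 0 ψ = 0 := rfl

lemma SS_cons {γ : Type*} (a : γ) (m : Multiset γ) (ψ : γ → ℝ) :
    SS (a ::ₘ m) ψ = Finsupp.single (ψ a) 1 + SS m ψ := by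
  simp [SS]

lemma SS_add {γ : Type*} (m₁ m₂ : Multiset γ) (ψ : γ → ℝ) :
    SS (m₁ + m₂) ψ = SS m₁ ψ + SS m₂ ψ := by
  simp [SS]

lemma SS_map {γ δ : Type*} (m : Multiset γ) (g : γ → δ) (ψ : δ → ℝ) :
    SS (m.map g) ψ = SS m (ψ ∘ g) := by
  simp [SS, Multiset.map_map]

lemma SS_congr {γ : Type*} {m : Multiset γ} {ψ ψ' : γ → ℝ}
    (h : ∀ a ∈ m, ψ a = ψ' a) : SS m ψ = SS m ψ' := by
  unfold SS
  congr 1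
  exact Multiset.map_congr rfl (fun a ha => by rw [h a ha])

lemma SS_apply {γ : Type*} (m : Multiset γ) (ψ : γ → ℝ) (c : ℝ) :
    SS m ψ c = ((m.filter (fun a => ψ a = c)).card : ℤ) := by
  induction m using Multiset.induction_on with
  | empty => simp [SS_zero]
  | cons a m ih =>
      rw [SS_cons]
      by_cases hc : ψ a = c
      · simp [Multiset.filter_cons, Finsupp.single_apply, hc, ih]
        ring
      · simp [Multiset.filter_cons, Finsupp.single_apply, hc, ih]

lemma SS_apply_eq_zero {γ : Type*} {m : Multiset γ} {ψ : γ → ℝ} {c : ℝ}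
    (h : ∀ a ∈ m, ψ a ≠ c) : SS m ψ c = 0 := by
  rw [SS_apply]
  have : m.filter (fun a => ψ a = c) = 0 :=
    Multiset.filter_eq_nil.mpr h
  simp [this]


/-- minimal sum over p-element sub-multisets -/
noncomputable def smin (p : ℕ) (m : Multiset ℝ) : ℝ :=
  mm ((Multiset.powersetCard p m).map Multiset.sum)

lemma pcard_ne_zero' {γ : Type*} {p : ℕ} {m : Multiset γ} (hp : p ≤ Multiset.card m) :
    (Multiset.powersetCard p m) ≠ 0 := by
  intro h
  have hpos := Nat.choose_pos hp
  have hcc := Multiset.card_powersetCard p m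
  rw [h] at hcc
  simp only [Multiset.card_zero] at hcc
  omega

lemma smin_le {p : ℕ} {m : Multiset ℝ} {s : Multiset ℝ}
    (hs : s ∈ Multiset.powersetCard p m) : smin p m ≤ s.sum :=
  mm_le (Multiset.mem_map_of_mem _ hs)

lemma smin_exists {p : ℕ} {m : Multiset ℝ} (hp : p ≤ Multiset.card m) :
    ∃ s ∈ Multiset.powersetCard p m, s.sum = smin p m := by
  have hne : ((Multiset.powersetCard p m).map Multiset.sum) ≠ 0 := by
    simp only [ne_eq, Multiset.map_eq_zero]
    exact pcard_ne_zero' hp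
  have := mm_mem hne
  rw [Multiset.mem_map] at this
  obtain ⟨s, hs, hsum⟩ := this
  exact ⟨s, hs, hsum⟩

lemma smin_of_big {p : ℕ} {m : Multiset ℝ} (hp : Multiset.card m < p) :
    smin p m = 0 := by
  rw [smin, Multiset.powersetCard_eq_empty _ hp]
  show sInf {x | x ∈ (0 : Multiset ℝ)} = 0
  have : {x | x ∈ (0 : Multiset ℝ)} = (∅ : Set ℝ) := by ext x; simp
  rw [this]
  exact Real.sInf_empty

/-- exchange lemma: the minimal (p+1)-sum contains the minimum element -/
lemma smin_succ {m : Multiset ℝ} (hm : m ≠ 0) {p : ℕ} (hpc : p + 1 ≤ Multiset.card m) :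
    smin (p + 1) m = mm m + smin p (m.erase (mm m)) := by
  have hamem : mm m ∈ m := mm_mem hm
  have hcards : Multiset.card (m.erase (mm m)) + 1 = Multiset.card m :=
    Multiset.card_erase_add_one hamem
  have hple : p ≤ Multiset.card (m.erase (mm m)) := by omega
  apply le_antisymm
  · -- ≤ : witness a ::ₘ t
    obtain ⟨t, ht, htsum⟩ := smin_exists hple
    rw [Multiset.mem_powersetCard] at ht
    have : (mm m ::ₘ t) ∈ Multiset.powersetCard (p+1) m := by
      rw [Multiset.mem_powersetCard]
      constructor
      · calc mm m ::ₘ t ≤ mm m ::ₘ m.erase (mm m) := Multiset.cons_le_cons _ ht.1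
          _ = m := Multiset.cons_erase hamem
      · simp [ht.2]
    have h2 := smin_le this
    rw [Multiset.sum_cons, htsum] at h2
    exact h2
  · -- ≥ : exchange
    obtain ⟨s, hs, hsum⟩ := smin_exists hpc
    rw [Multiset.mem_powersetCard] at hs
    by_cases hmem : mm m ∈ s
    · have hcs : Multiset.card (s.erase (mm m)) + 1 = Multiset.card s :=
        Multiset.card_erase_add_one hmem
      have herase : s.erase (mm m) ∈ Multiset.powersetCard p (m.erase (mm m)) := by
        rw [Multiset.mem_powersetCard]
        exact ⟨Multiset.erase_le_erase _ hs.1, by omega⟩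
      have h3 := smin_le herase
      have h4 : s.sum = mm m + (s.erase (mm m)).sum := by
        conv_lhs => rw [← Multiset.cons_erase hmem]
        rw [Multiset.sum_cons]
      rw [← hsum, h4]
      linarith
    · -- s ≤ m.erase (mm m)
      have hsle : s ≤ m.erase (mm m) := by
        rw [Multiset.le_iff_count]
        intro b
        by_cases hb : b = mm m
        · subst hb
          simp [Multiset.count_eq_zero_of_notMem hmem]
        · rw [Multiset.count_erase_of_ne hb]
          exact Multiset.le_iff_count.mp hs.1 b
      have hsne : s ≠ 0 := by
        intro h0; rw [h0] at hs; simp at hs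
      obtain ⟨x, hx⟩ := Multiset.exists_mem_of_ne_zero hsne
      have hcs : Multiset.card (s.erase x) + 1 = Multiset.card s :=
        Multiset.card_erase_add_one hx
      have hex : s.erase x ∈ Multiset.powersetCard p (m.erase (mm m)) := by
        rw [Multiset.mem_powersetCard]
        exact ⟨le_trans (Multiset.erase_le _ _) hsle, by omega⟩
      have h3 := smin_le hex
      have h4 : s.sum = x + (s.erase x).sum := by
        conv_lhs => rw [← Multiset.cons_erase hx]
        rw [Multiset.sum_cons]
      have hax : mm m ≤ x := mm_le (Multiset.mem_of_le hs.1 hx)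
      rw [← hsum, h4]
      linarith

lemma smin_one (m : Multiset ℝ) : smin 1 m = mm m := by
  rw [smin, Multiset.powersetCard_one, Multiset.map_map]
  congr 1
  have : (Multiset.sum ∘ fun x : ℝ => ({x} : Multiset ℝ)) = id := by
    funext x; simp
  rw [this, Multiset.map_id]

/-- multisets of reals with the same minimal p-sums for all p are equal -/
lemma smin_inj : ∀ (n : ℕ) (m₁ m₂ : Multiset ℝ), Multiset.card m₁ = n →
    Multiset.card m₂ = n → (∀ p, smin p m₁ = smin p m₂) → m₁ = m₂ := by
  intro n
  induction n with
  | zero => intro m₁ m₂ h₁ h₂ _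
            rw [Multiset.card_eq_zero] at h₁ h₂; rw [h₁, h₂]
  | succ n ih =>
      intro m₁ m₂ h₁ h₂ hs
      have hm₁ : m₁ ≠ 0 := by intro h; rw [h] at h₁; simp at h₁
      have hm₂ : m₂ ≠ 0 := by intro h; rw [h] at h₂; simp at h₂
      have hmm : mm m₁ = mm m₂ := by
        have := hs 1
        rwa [smin_one, smin_one] at this
      have hce₁ : Multiset.card (m₁.erase (mm m₁)) + 1 = n + 1 := by
        rw [Multiset.card_erase_add_one (mm_mem hm₁), h₁]
      have hce₂ : Multiset.card (m₂.erase (mm m₂)) + 1 = n + 1 := by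
        rw [Multiset.card_erase_add_one (mm_mem hm₂), h₂]
      have key : ∀ p, smin p (m₁.erase (mm m₁)) = smin p (m₂.erase (mm m₂)) := by
        intro p
        by_cases hp : p + 1 ≤ n + 1
        · have e₁ := smin_succ hm₁ (p := p) (by omega)
          have e₂ := smin_succ hm₂ (p := p) (by omega)
          have hthis := hs (p + 1)
          rw [e₁, e₂] at hthis
          linarith [hmm]
        · rw [smin_of_big (by omega), smin_of_big (by omega)]
      have heq := ih (m₁.erase (mm m₁)) (m₂.erase (mm m₂)) (by omega) (by omega) key
      calc m₁ = mm m₁ ::ₘ m₁.erase (mm m₁) := (Multiset.cons_erase (mm_mem hm₁)).symm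
        _ = m₂ := by rw [heq, hmm]; exact Multiset.cons_erase (mm_mem hm₂)


lemma sep_core {m₁ m₂ : Multiset ℝ} {p : ℕ} (hp : p ≤ Multiset.card m₁)
    (hlt : smin p m₁ < smin p m₂) :
    ∃ c : ℝ,
      (Multiset.card ((Multiset.powersetCard p m₁).filter (fun s => s.sum = c)) ≠
       Multiset.card ((Multiset.powersetCard p m₂).filter (fun s => s.sum = c))) ∧
      (∀ s ∈ Multiset.powersetCard p m₁, c ≤ s.sum) ∧
      (∀ s ∈ Multiset.powersetCard p m₂, c ≤ s.sum) := by
  refine ⟨smin p m₁, ?_, fun s hs => smin_le hs, fun s hs => le_trans (le_of_lt hlt) (smin_le hs)⟩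
  have h₂ : (Multiset.powersetCard p m₂).filter (fun s => s.sum = smin p m₁) = 0 := by
    apply Multiset.filter_eq_nil.mpr
    intro s hs hsum
    exact absurd hsum (by have := smin_le hs; intro he; rw [he] at this; linarith)
  obtain ⟨s₀, hs₀, hsum₀⟩ := smin_exists hp
  have h₁ : s₀ ∈ (Multiset.powersetCard p m₁).filter (fun s => s.sum = smin p m₁) :=
    Multiset.mem_filter.mpr ⟨hs₀, hsum₀⟩
  rw [h₂]
  simp only [Multiset.card_zero]
  intro hc
  have : Multiset.card ((Multiset.powersetCard p m₁).filter (fun s => s.sum = smin p m₁)) ≠ 0 := by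
    intro h0
    rw [Multiset.card_eq_zero] at h0
    rw [h0] at h₁
    exact absurd h₁ (Multiset.notMem_zero _)
  exact this hc

lemma sep_card {m₁ m₂ : Multiset ℝ} (hlt : Multiset.card m₁ < Multiset.card m₂) :
    ∃ p : ℕ, 1 ≤ p ∧ ∃ c : ℝ,
      (Multiset.card ((Multiset.powersetCard p m₁).filter (fun s => s.sum = c)) ≠
       Multiset.card ((Multiset.powersetCard p m₂).filter (fun s => s.sum = c))) ∧
      (∀ s ∈ Multiset.powersetCard p m₁, c ≤ s.sum) ∧
      (∀ s ∈ Multiset.powersetCard p m₂, c ≤ s.sum) := by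
  refine ⟨Multiset.card m₁ + 1, by omega, smin (Multiset.card m₁ + 1) m₂, ?_, ?_, ?_⟩
  · rw [Multiset.powersetCard_eq_empty _ (by omega)]
    obtain ⟨s₀, hs₀, hsum₀⟩ := smin_exists (m := m₂) (p := Multiset.card m₁ + 1) (by omega)
    have h₁ : s₀ ∈ (Multiset.powersetCard (Multiset.card m₁ + 1) m₂).filter
        (fun s => s.sum = smin (Multiset.card m₁ + 1) m₂) :=
      Multiset.mem_filter.mpr ⟨hs₀, hsum₀⟩
    simp only [Multiset.filter_zero, Multiset.card_zero]
    intro hc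
    rw [eq_comm, Multiset.card_eq_zero] at hc
    rw [hc] at h₁
    exact absurd h₁ (Multiset.notMem_zero _)
  · intro s hs
    rw [Multiset.powersetCard_eq_empty _ (by omega)] at hs
    exact absurd hs (Multiset.notMem_zero _)
  · intro s hs
    exact smin_le hs

/-- separation lemma: different real multisets differ at a "bottom" count -/
lemma sep {m₁ m₂ : Multiset ℝ} (hne : m₁ ≠ m₂) :
    ∃ p : ℕ, 1 ≤ p ∧ ∃ c : ℝ,
      (Multiset.card ((Multiset.powersetCard p m₁).filter (fun s => s.sum = c)) ≠
       Multiset.card ((Multiset.powersetCard p m₂).filter (fun s => s.sum = c))) ∧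
      (∀ s ∈ Multiset.powersetCard p m₁, c ≤ s.sum) ∧
      (∀ s ∈ Multiset.powersetCard p m₂, c ≤ s.sum) := by
  rcases lt_trichotomy (Multiset.card m₁) (Multiset.card m₂) with hc | hc | hc
  · exact sep_card hc
  · -- equal cards
    have hex : ∃ p, smin p m₁ ≠ smin p m₂ := by
      by_contra hall
      push_neg at hall
      exact hne (smin_inj (Multiset.card m₁) m₁ m₂ rfl hc.symm hall)
    obtain ⟨p, hp⟩ := hex
    have hp1 : 1 ≤ p := by
      rcases Nat.eq_zero_or_pos p with h0 | h1
      · exfalso; apply hp; rw [h0]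
        have e₁ : Multiset.powersetCard 0 m₁ = {0} := Multiset.powersetCard_zero_left m₁
        have e₂ : Multiset.powersetCard 0 m₂ = {0} := Multiset.powersetCard_zero_left m₂
        rw [smin, smin, e₁, e₂]
      · exact h1
    have hple : p ≤ Multiset.card m₁ := by
      by_contra hgt
      push_neg at hgt
      apply hp
      rw [smin_of_big hgt, smin_of_big (by omega)]
    rcases lt_or_gt_of_ne hp with hlt | hgt
    · obtain ⟨c, hcc⟩ := sep_core hple hlt
      exact ⟨p, hp1, c, hcc⟩
    · obtain ⟨c, hcc, hb₂, hb₁⟩ := sep_core (m₁ := m₂) (m₂ := m₁) (by omega) hgt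
      exact ⟨p, hp1, c, hcc.symm, hb₁, hb₂⟩
  · obtain ⟨p, hp1, c, hcc, hb₂, hb₁⟩ := sep_card hc
    exact ⟨p, hp1, c, hcc.symm, hb₁, hb₂⟩

/-! ### series of exterior powers -/

lemma birth_eq (h : Multiset (ℝ × ℝ)) (p : ℕ) :
    birthSeries (extPow h p) =
      SS (Multiset.powersetCard p h) (fun s => (s.map Prod.fst).sum) := by
  unfold birthSeries extPow SS
  rw [Multiset.map_map]
  rfl

lemma death_eq (h : Multiset (ℝ × ℝ)) (p : ℕ) :
    deathSeries (extPow h p) =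
      SS (Multiset.powersetCard p h)
        (fun s => (s.map Prod.fst).sum + mm (s.map Prod.snd)) := by
  unfold deathSeries extPow SS
  rw [Multiset.map_map]
  rfl

lemma crit_eq (h : Multiset (ℝ × ℝ)) (p : ℕ) :
    critSeries (extPow h p) =
      SS (Multiset.powersetCard p h) (fun s => (s.map Prod.fst).sum) -
      SS (Multiset.powersetCard p h)
        (fun s => (s.map Prod.fst).sum + mm (s.map Prod.snd)) := by
  unfold critSeries
  rw [birth_eq, death_eq]

lemma SS_fst (h : Multiset (ℝ × ℝ)) (p : ℕ) (a : ℝ) :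
    SS (Multiset.powersetCard p (h.map Prod.fst)) (fun s => s.sum + a) =
      SS (Multiset.powersetCard p h) (fun s => (s.map Prod.fst).sum + a) := by
  rw [Multiset.powersetCard_map, SS_map]
  rfl

lemma SS_fst0 (h : Multiset (ℝ × ℝ)) (p : ℕ) :
    SS (Multiset.powersetCard p (h.map Prod.fst)) (fun s => s.sum) =
      SS (Multiset.powersetCard p h) (fun s => (s.map Prod.fst).sum) := by
  rw [Multiset.powersetCard_map, SS_map]
  rfl

/-! ### moments -/

lemma moment_zero : moment 0 = 0 := by
  unfold moment; exact Finsupp.sum_zero_index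

lemma moment_add (P Q : ℝ →₀ ℤ) : moment (P + Q) = moment P + moment Q := by
  unfold moment
  exact Finsupp.sum_add_index' (by intro a; simp) (by intro a b₁ b₂; push_cast; ring)

lemma moment_sub (P Q : ℝ →₀ ℤ) : moment (P - Q) = moment P - moment Q := by
  have h := moment_add (P - Q) Q
  rw [sub_add_cancel] at h
  linarith

lemma moment_single (x : ℝ) : moment (Finsupp.single x (1 : ℤ)) = x := by
  unfold moment
  rw [Finsupp.sum_single_index] <;> simp

lemma moment_SS {γ : Type*} (m : Multiset γ) (ψ : γ → ℝ) :
    moment (SS m ψ) = (m.map ψ).sum := by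
  induction m using Multiset.induction_on with
  | empty => simp [SS_zero, moment_zero]
  | cons a m ih => rw [SS_cons, moment_add, moment_single, Multiset.map_cons,
      Multiset.sum_cons, ih]

lemma mins_pos {f : Multiset (ℝ × ℝ)} (hf : IsBarcode f) {p : ℕ} (hp : 1 ≤ p)
    {s : Multiset (ℝ × ℝ)} (hs : s ∈ Multiset.powersetCard p f) :
    0 < mm (s.map Prod.snd) := by
  rw [Multiset.mem_powersetCard] at hs
  have hne : s.map Prod.snd ≠ 0 := by
    simp only [ne_eq, Multiset.map_eq_zero]
    intro h0
    rw [h0] at hs; simp at hs; omega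
  have := mm_mem hne
  rw [Multiset.mem_map] at this
  obtain ⟨b, hb, hbeq⟩ := this
  rw [← hbeq]
  exact hf b (Multiset.mem_of_le hs.1 hb)

lemma msum_pos {m : Multiset ℝ} (hne : m ≠ 0) (hpos : ∀ x ∈ m, 0 < x) : 0 < m.sum := by
  induction m using Multiset.induction_on with
  | empty => exact absurd rfl hne
  | cons a m ih =>
      rw [Multiset.sum_cons]
      by_cases h0 : m = 0
      · rw [h0]; simpa using hpos a (Multiset.mem_cons_self a m)
      · have h1 : 0 < a := hpos a (Multiset.mem_cons_self a m)
        have h2 : 0 < m.sum :=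
          ih h0 (fun x hx => hpos x (Multiset.mem_cons_of_mem hx))
        linarith

lemma crit_moment {f : Multiset (ℝ × ℝ)} (p : ℕ) :
    moment (critSeries (extPow f p)) =
      -(((Multiset.powersetCard p f).map (fun s => mm (s.map Prod.snd))).sum) := by
  rw [crit_eq, moment_sub, moment_SS, moment_SS]
  rw [Multiset.sum_map_add]
  ring

lemma crit_moment_neg {f : Multiset (ℝ × ℝ)} (hf : IsBarcode f) {p : ℕ}
    (hp1 : 1 ≤ p) (hple : p ≤ Multiset.card f) :
    moment (critSeries (extPow f p)) < 0 := by
  rw [crit_moment]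
  have hpos : 0 < ((Multiset.powersetCard p f).map (fun s => mm (s.map Prod.snd))).sum := by
    apply msum_pos
    · simp only [ne_eq, Multiset.map_eq_zero]
      exact pcard_ne_zero' hple
    · intro x hx
      rw [Multiset.mem_map] at hx
      obtain ⟨s, hs, hseq⟩ := hx
      rw [← hseq]
      exact mins_pos hf hp1 hs
  linarith

lemma crit_of_big {f : Multiset (ℝ × ℝ)} {p : ℕ} (hp : Multiset.card f < p) :
    critSeries (extPow f p) = 0 := by
  rw [crit_eq, Multiset.powersetCard_eq_empty _ hp, SS_zero, SS_zero, sub_zero]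

lemma cards_eq {f g : Multiset (ℝ × ℝ)} (hf : IsBarcode f) (hg : IsBarcode g)
    (h : ∀ p : ℕ, 1 ≤ p → critSeries (extPow f p) = critSeries (extPow g p)) :
    Multiset.card f = Multiset.card g := by
  rcases lt_trichotomy (Multiset.card f) (Multiset.card g) with hc | hc | hc
  · exfalso
    have h1 := h (Multiset.card g) (by omega)
    have h2 := crit_moment_neg hg (p := Multiset.card g) (by omega) le_rfl
    rw [← h1, crit_of_big hc, moment_zero] at h2
    linarith
  · exact hc
  · exfalso
    have h1 := h (Multiset.card f) (by omega)
    have h2 := crit_moment_neg hf (p := Multiset.card f) (by omega) le_rfl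
    rw [h1, crit_of_big hc, moment_zero] at h2
    linarith

lemma mem_pcard_map {s h : Multiset (ℝ × ℝ)} {p : ℕ}
    (hs : s ∈ Multiset.powersetCard p h) :
    s.map Prod.fst ∈ Multiset.powersetCard p (h.map Prod.fst) := by
  rw [Multiset.powersetCard_map]
  exact Multiset.mem_map_of_mem _ hs

/-- STEP B: equal critical series of exterior powers force equal birth multisets -/
lemma births_eq {f g : Multiset (ℝ × ℝ)} (hf : IsBarcode f) (hg : IsBarcode g)
    (h : ∀ p : ℕ, 1 ≤ p → critSeries (extPow f p) = critSeries (extPow g p)) :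
    f.map Prod.fst = g.map Prod.fst := by
  by_contra hne
  obtain ⟨p, hp1, c, hcc, hb₁, hb₂⟩ := sep hne
  apply hcc
  have key : ∀ (F : Multiset (ℝ × ℝ)), IsBarcode F →
      (∀ s ∈ Multiset.powersetCard p (F.map Prod.fst), c ≤ s.sum) →
      critSeries (extPow F p) c =
        ((Multiset.powersetCard p (F.map Prod.fst)).filter (fun s => s.sum = c)).card := by
    intro F hF hb
    rw [crit_eq, Finsupp.sub_apply]
    have hd : SS (Multiset.powersetCard p F)
        (fun s => (s.map Prod.fst).sum + mm (s.map Prod.snd)) c = 0 := by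
      apply SS_apply_eq_zero
      intro s hs
      have h1 : c ≤ (s.map Prod.fst).sum := hb _ (mem_pcard_map hs)
      have h2 : 0 < mm (s.map Prod.snd) := mins_pos hF hp1 hs
      intro hcontra
      linarith
    rw [hd, sub_zero, ← SS_fst0, SS_apply]
  have hfc := key f hf hb₁
  have hgc := key g hg hb₂
  have := h p hp1
  rw [this] at hfc
  rw [hfc] at hgc
  exact_mod_cast hgc

lemma pcard_self (f : Multiset (ℝ × ℝ)) :
    Multiset.powersetCard (Multiset.card f) f = {f} := by
  have hcard : Multiset.card (Multiset.powersetCard (Multiset.card f) f) = 1 := by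
    rw [Multiset.card_powersetCard, Nat.choose_self]
  obtain ⟨a, ha⟩ := Multiset.card_eq_one.mp hcard
  have hmem : f ∈ Multiset.powersetCard (Multiset.card f) f :=
    Multiset.mem_powersetCard.mpr ⟨le_rfl, rfl⟩
  rw [ha] at hmem ⊢
  rw [Multiset.mem_singleton] at hmem
  rw [hmem]

lemma SS_singleton {γ : Type*} (a : γ) (ψ : γ → ℝ) :
    SS {a} ψ = Finsupp.single (ψ a) 1 := by
  have : ({a} : Multiset γ) = a ::ₘ 0 := rfl
  rw [this, SS_cons, SS_zero, add_zero]

lemma top_crit (f : Multiset (ℝ × ℝ)) :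
    critSeries (extPow f (Multiset.card f)) =
      Finsupp.single ((f.map Prod.fst).sum) 1 -
      Finsupp.single ((f.map Prod.fst).sum + mm (f.map Prod.snd)) 1 := by
  rw [crit_eq, pcard_self, SS_singleton, SS_singleton]

lemma u_pos {f : Multiset (ℝ × ℝ)} (hf : IsBarcode f) (hne : f ≠ 0) :
    0 < mm (f.map Prod.snd) := by
  have hmne : f.map Prod.snd ≠ 0 := by
    simp only [ne_eq, Multiset.map_eq_zero]; exact hne
  have := mm_mem hmne
  rw [Multiset.mem_map] at this
  obtain ⟨b, hb, hbeq⟩ := this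
  rw [← hbeq]
  exact hf b hb

/-- STEP: the minimal lifespans agree -/
lemma u_eq {f g : Multiset (ℝ × ℝ)} (hf : IsBarcode f) (hne : f ≠ 0)
    (hbs : f.map Prod.fst = g.map Prod.fst)
    (hcrit : critSeries (extPow f (Multiset.card f)) =
      critSeries (extPow g (Multiset.card g))) :
    mm (f.map Prod.snd) = mm (g.map Prod.snd) := by
  have hgd : (g.map Prod.fst).sum = (f.map Prod.fst).sum := by rw [hbs]
  have hupos : 0 < mm (f.map Prod.snd) := u_pos hf hne
  have e1 := top_crit f
  have e2 := top_crit g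
  rw [e1, e2, hgd] at hcrit
  by_contra hnee
  have hthis := DFunLike.congr_fun hcrit ((f.map Prod.fst).sum + mm (f.map Prod.snd))
  rw [Finsupp.sub_apply, Finsupp.sub_apply, Finsupp.single_eq_same,
    Finsupp.single_eq_of_ne' (show (f.map Prod.fst).sum ≠
      (f.map Prod.fst).sum + mm (f.map Prod.snd) by intro hh; linarith),
    Finsupp.single_eq_of_ne' (show (f.map Prod.fst).sum + mm (g.map Prod.snd) ≠
      (f.map Prod.fst).sum + mm (f.map Prod.snd) from fun hh => hnee (by linarith))] at hthis
  norm_num at hthis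

lemma mm_cons {u : ℝ} {m : Multiset ℝ} (hs : ∀ x ∈ m, u ≤ x) :
    mm (u ::ₘ m) = u := by
  apply le_antisymm
  · exact mm_le (Multiset.mem_cons_self _ _)
  · apply le_mm (Multiset.cons_ne_zero)
    intro x hx
    rcases Multiset.mem_cons.mp hx with h1 | h2
    · rw [h1]
    · exact hs x h2

/-- STEP C core: splitting off a minimal-lifespan bar -/
lemma crit_erase (F : Multiset (ℝ × ℝ)) (b : ℝ × ℝ) (hb : b ∈ F)
    (hu : ∀ x ∈ F.map Prod.snd, b.2 ≤ x) (q : ℕ) :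
    critSeries (extPow F (q+1)) = critSeries (extPow (F.erase b) (q+1)) +
      (SS (Multiset.powersetCard q ((F.erase b).map Prod.fst)) (fun s => s.sum + b.1) -
       SS (Multiset.powersetCard q ((F.erase b).map Prod.fst))
         (fun s => s.sum + (b.1 + b.2))) := by
  set t := F.erase b with ht
  have hsplit : Multiset.powersetCard (q+1) F =
      Multiset.powersetCard (q+1) t + (Multiset.powersetCard q t).map (Multiset.cons b) := by
    conv_lhs => rw [← Multiset.cons_erase hb]
    exact Multiset.powersetCard_cons q b t
  have hmem_snd : ∀ s ∈ Multiset.powersetCard q t, ∀ x ∈ s.map Prod.snd, b.2 ≤ x := by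
    intro s hs x hx
    rw [Multiset.mem_powersetCard] at hs
    apply hu
    have : s.map Prod.snd ≤ F.map Prod.snd :=
      Multiset.map_le_map (le_trans hs.1 (Multiset.erase_le b F))
    exact Multiset.mem_of_le this hx
  have e1 : SS ((Multiset.powersetCard q t).map (Multiset.cons b))
      (fun s => (s.map Prod.fst).sum) =
      SS (Multiset.powersetCard q (t.map Prod.fst)) (fun s => s.sum + b.1) := by
    rw [SS_map]
    rw [SS_congr (ψ' := fun s : Multiset (ℝ × ℝ) => (s.map Prod.fst).sum + b.1)
      (fun s _ => by
        simp only [Function.comp_apply, Multiset.map_cons, Multiset.sum_cons]; ring)]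
    exact (SS_fst t q b.1).symm
  have e2 : SS ((Multiset.powersetCard q t).map (Multiset.cons b))
      (fun s => (s.map Prod.fst).sum + mm (s.map Prod.snd)) =
      SS (Multiset.powersetCard q (t.map Prod.fst)) (fun s => s.sum + (b.1 + b.2)) := by
    rw [SS_map]
    rw [SS_congr (ψ' := fun s : Multiset (ℝ × ℝ) => (s.map Prod.fst).sum + (b.1 + b.2))
      (fun s hs => by
        simp only [Function.comp_apply, Multiset.map_cons, Multiset.sum_cons]
        rw [mm_cons (hmem_snd s hs)]
        ring)]
    exact (SS_fst t q (b.1 + b.2)).symm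
  rw [crit_eq F, crit_eq t, hsplit, SS_add, SS_add, e1, e2]
  abel

/-! ### the invariant `K_p = D_p - x^u B_p` and peeling of the minimal class -/

noncomputable def KK (u : ℝ) (p : ℕ) (F : Multiset (ℝ × ℝ)) : ℝ →₀ ℤ :=
  SS (Multiset.powersetCard p F)
    (fun s => (s.map Prod.fst).sum + mm (s.map Prod.snd)) -
  SS (Multiset.powersetCard p F) (fun s => (s.map Prod.fst).sum + u)

lemma KK_peel (u : ℝ) (q : ℕ) (F : Multiset (ℝ × ℝ)) (b : ℝ × ℝ) (hb : b ∈ F)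
    (hbu : b.2 = u) (hu : ∀ x ∈ F.map Prod.snd, u ≤ x) :
    KK u (q+1) F = KK u (q+1) (F.erase b) := by
  have hsplit : Multiset.powersetCard (q+1) F =
      Multiset.powersetCard (q+1) (F.erase b) +
        (Multiset.powersetCard q (F.erase b)).map (Multiset.cons b) := by
    conv_lhs => rw [← Multiset.cons_erase hb]
    exact Multiset.powersetCard_cons q b (F.erase b)
  have hmem_snd : ∀ s ∈ Multiset.powersetCard q (F.erase b),
      ∀ x ∈ s.map Prod.snd, u ≤ x := by
    intro s hs x hx
    rw [Multiset.mem_powersetCard] at hs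
    apply hu
    have : s.map Prod.snd ≤ F.map Prod.snd :=
      Multiset.map_le_map (le_trans hs.1 (Multiset.erase_le b F))
    exact Multiset.mem_of_le this hx
  unfold KK
  rw [hsplit, SS_add, SS_add, SS_map, SS_map]
  have e2 : SS (Multiset.powersetCard q (F.erase b))
      ((fun s : Multiset (ℝ × ℝ) =>
        (s.map Prod.fst).sum + mm (s.map Prod.snd)) ∘ Multiset.cons b) =
      SS (Multiset.powersetCard q (F.erase b))
      ((fun s : Multiset (ℝ × ℝ) => (s.map Prod.fst).sum + u) ∘ Multiset.cons b) := by
    apply SS_congr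
    intro s hs
    simp only [Function.comp_apply, Multiset.map_cons, Multiset.sum_cons]
    rw [hbu] at *
    rw [mm_cons (hmem_snd s hs)]
  rw [e2]
  abel

lemma KK_filter (u : ℝ) (q : ℕ) : ∀ (n : ℕ) (F : Multiset (ℝ × ℝ)),
    Multiset.card F = n → (∀ x ∈ F.map Prod.snd, u ≤ x) →
    KK u (q+1) F = KK u (q+1) (F.filter (fun b => ¬ (b.2 = u))) := by
  intro n
  induction n with
  | zero =>
      intro F hF _
      rw [Multiset.card_eq_zero.mp hF]
      rw [Multiset.filter_zero]
  | succ n ih =>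
      intro F hF hu
      by_cases hex : ∃ b ∈ F, b.2 = u
      · obtain ⟨b, hbF, hbu⟩ := hex
        have h1 := KK_peel u q F b hbF hbu hu
        have hcard : Multiset.card (F.erase b) = n := by
          have := Multiset.card_erase_add_one hbF; omega
        have hu' : ∀ x ∈ (F.erase b).map Prod.snd, u ≤ x := fun x hx =>
          hu x (Multiset.mem_of_le (Multiset.map_le_map (Multiset.erase_le b F)) hx)
        have h2 := ih (F.erase b) hcard hu'
        have h3 : (F.erase b).filter (fun b => ¬ (b.2 = u)) =
            F.filter (fun b => ¬ (b.2 = u)) := by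
          conv_rhs => rw [← Multiset.cons_erase hbF]
          rw [Multiset.filter_cons_of_neg]
          simp [hbu]
        rw [h1, h2, h3]
      · push_neg at hex
        have hself : F.filter (fun b => ¬ (b.2 = u)) = F :=
          Multiset.filter_eq_self.mpr (fun b hb => hex b hb)
        rw [hself]

/-! ### main induction -/

lemma main_induction : ∀ (n : ℕ) (f g : Multiset (ℝ × ℝ)), Multiset.card f = n →
    IsBarcode f → IsBarcode g →
    (∀ p : ℕ, 1 ≤ p → critSeries (extPow f p) = critSeries (extPow g p)) →
    f = g := by
  intro n
  induction n with
  | zero =>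
      intro f g hn hf hg h
      have hc := cards_eq hf hg h
      rw [Multiset.card_eq_zero.mp hn,
        Multiset.card_eq_zero.mp (show Multiset.card g = 0 by omega)]
  | succ n ih =>
      intro f g hn hf hg h
      have hc := cards_eq hf hg h
      have hfne : f ≠ 0 := by intro h0; rw [h0] at hn; simp at hn
      have hgne : g ≠ 0 := by
        intro h0; rw [h0] at hc; simp only [Multiset.card_zero] at hc; omega
      have hbs : f.map Prod.fst = g.map Prod.fst := births_eq hf hg h
      have hueq : mm (f.map Prod.snd) = mm (g.map Prod.snd) := by
        apply u_eq hf hfne hbs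
        have := h (Multiset.card f) (by omega)
        rw [hc] at this ⊢
        exact this
      have huF : ∀ x ∈ f.map Prod.snd, mm (f.map Prod.snd) ≤ x := fun x hx => mm_le hx
      have huG : ∀ x ∈ g.map Prod.snd, mm (f.map Prod.snd) ≤ x := fun x hx => by
        rw [hueq]; exact mm_le hx
      by_cases hex : ∃ α : ℝ, (α, mm (f.map Prod.snd)) ∈ f ∧ (α, mm (f.map Prod.snd)) ∈ g
      · -- a common bar of minimal lifespan: peel it off
        obtain ⟨α, hbf, hbg⟩ := hex
        have hbs' : (f.erase (α, mm (f.map Prod.snd))).map Prod.fst =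
            (g.erase (α, mm (f.map Prod.snd))).map Prod.fst := by
          have e1 : f.map Prod.fst =
              α ::ₘ (f.erase (α, mm (f.map Prod.snd))).map Prod.fst := by
            conv_lhs => rw [← Multiset.cons_erase hbf]
            rw [Multiset.map_cons]
          have e2 : g.map Prod.fst =
              α ::ₘ (g.erase (α, mm (f.map Prod.snd))).map Prod.fst := by
            conv_lhs => rw [← Multiset.cons_erase hbg]
            rw [Multiset.map_cons]
          have := hbs
          rw [e1, e2] at this
          exact (Multiset.cons_inj_right α).mp this
        have hred : ∀ p : ℕ, 1 ≤ p →
            critSeries (extPow (f.erase (α, mm (f.map Prod.snd))) p) =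
            critSeries (extPow (g.erase (α, mm (f.map Prod.snd))) p) := by
          intro p hp
          obtain ⟨q, rfl⟩ : ∃ q, p = q + 1 := ⟨p - 1, by omega⟩
          have ef := crit_erase f (α, mm (f.map Prod.snd)) hbf huF q
          have eg := crit_erase g (α, mm (f.map Prod.snd)) hbg huG q
          have hh := h (q+1) (by omega)
          rw [ef, eg, hbs'] at hh
          exact add_right_cancel hh
        have hcard' : Multiset.card (f.erase (α, mm (f.map Prod.snd))) = n := by
          have := Multiset.card_erase_add_one hbf; omega
        have hfin := ih (f.erase (α, mm (f.map Prod.snd)))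
          (g.erase (α, mm (f.map Prod.snd))) hcard'
          (fun x hx => hf x (Multiset.mem_of_mem_erase hx))
          (fun x hx => hg x (Multiset.mem_of_mem_erase hx)) hred
        calc f = (α, mm (f.map Prod.snd)) ::ₘ f.erase (α, mm (f.map Prod.snd)) :=
              (Multiset.cons_erase hbf).symm
          _ = (α, mm (f.map Prod.snd)) ::ₘ g.erase (α, mm (f.map Prod.snd)) := by
              rw [hfin]
          _ = g := Multiset.cons_erase hbg
      · -- no common minimal bar: contradiction
        exfalso
        have hbs1 : (f.filter (fun b => ¬ (b.2 = mm (f.map Prod.snd)))).map Prod.fst ≠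
            (g.filter (fun b => ¬ (b.2 = mm (f.map Prod.snd)))).map Prod.fst := by
          intro heq
          apply hex
          have hsf := Multiset.filter_add_not (fun b : ℝ × ℝ => b.2 = mm (f.map Prod.snd)) f
          have hsg := Multiset.filter_add_not (fun b : ℝ × ℝ => b.2 = mm (f.map Prod.snd)) g
          have hmf : (f.filter (fun b => b.2 = mm (f.map Prod.snd))).map Prod.fst +
              (f.filter (fun b => ¬ (b.2 = mm (f.map Prod.snd)))).map Prod.fst =
              f.map Prod.fst := by rw [← Multiset.map_add, hsf]
          have hmg : (g.filter (fun b => b.2 = mm (f.map Prod.snd))).map Prod.fst +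
              (g.filter (fun b => ¬ (b.2 = mm (f.map Prod.snd)))).map Prod.fst =
              g.map Prod.fst := by rw [← Multiset.map_add, hsg]
          have hclass : (f.filter (fun b => b.2 = mm (f.map Prod.snd))).map Prod.fst =
              (g.filter (fun b => b.2 = mm (f.map Prod.snd))).map Prod.fst := by
            have hcomb : (f.filter (fun b => b.2 = mm (f.map Prod.snd))).map Prod.fst +
                (f.filter (fun b => ¬ (b.2 = mm (f.map Prod.snd)))).map Prod.fst =
                (g.filter (fun b => b.2 = mm (f.map Prod.snd))).map Prod.fst +
                (g.filter (fun b => ¬ (b.2 = mm (f.map Prod.snd)))).map Prod.fst := by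
              rw [hmf, hmg, hbs]
            rw [heq] at hcomb
            exact add_right_cancel hcomb
          -- the minimal class of f is nonempty
          have hmne : f.map Prod.snd ≠ 0 := by
            simp only [ne_eq, Multiset.map_eq_zero]; exact hfne
          have hmem := mm_mem hmne
          rw [Multiset.mem_map] at hmem
          obtain ⟨b₀, hb₀f, hb₀2⟩ := hmem
          have hb₀cl : b₀ ∈ f.filter (fun b => b.2 = mm (f.map Prod.snd)) :=
            Multiset.mem_filter.mpr ⟨hb₀f, hb₀2⟩
          have hα : b₀.1 ∈ (g.filter (fun b => b.2 = mm (f.map Prod.snd))).map Prod.fst := by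
            rw [← hclass]
            exact Multiset.mem_map_of_mem _ hb₀cl
          rw [Multiset.mem_map] at hα
          obtain ⟨b₁, hb₁cl, hb₁1⟩ := hα
          refine ⟨b₀.1, ?_, ?_⟩
          · rw [← hb₀2, Prod.mk.eta]; exact hb₀f
          · have hb₁2 : b₁.2 = mm (f.map Prod.snd) := (Multiset.mem_filter.mp hb₁cl).2
            rw [← hb₁1, ← hb₁2, Prod.mk.eta]
            exact Multiset.mem_of_mem_filter hb₁cl
        obtain ⟨p, hp1, c, hcc, hb₁, hb₂⟩ := sep hbs1
        obtain ⟨q, rfl⟩ : ∃ q, p = q + 1 := ⟨p - 1, by omega⟩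
        apply hcc
        -- K-invariant equality between f and g
        have hKfg : KK (mm (f.map Prod.snd)) (q+1) f = KK (mm (f.map Prod.snd)) (q+1) g := by
          unfold KK
          have hD : SS (Multiset.powersetCard (q+1) f)
              (fun s => (s.map Prod.fst).sum + mm (s.map Prod.snd)) =
              SS (Multiset.powersetCard (q+1) g)
              (fun s => (s.map Prod.fst).sum + mm (s.map Prod.snd)) := by
            have cf := crit_eq f (q+1)
            have cg := crit_eq g (q+1)
            have hBf : SS (Multiset.powersetCard (q+1) f) (fun s => (s.map Prod.fst).sum) =
                SS (Multiset.powersetCard (q+1) g) (fun s => (s.map Prod.fst).sum) := by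
              rw [← SS_fst0 f, ← SS_fst0 g, hbs]
            have hh := h (q+1) (by omega)
            rw [cf, cg] at hh
            rw [hBf] at hh
            exact sub_right_injective hh
          have hB : SS (Multiset.powersetCard (q+1) f)
              (fun s => (s.map Prod.fst).sum + mm (f.map Prod.snd)) =
              SS (Multiset.powersetCard (q+1) g)
              (fun s => (s.map Prod.fst).sum + mm (f.map Prod.snd)) := by
            rw [← SS_fst f, ← SS_fst g, hbs]
          rw [hD, hB]
        have hKf := KK_filter (mm (f.map Prod.snd)) q (Multiset.card f) f rfl huF
        have hKg := KK_filter (mm (f.map Prod.snd)) q (Multiset.card g) g rfl huG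
        have hK1 : KK (mm (f.map Prod.snd)) (q+1)
              (f.filter (fun b => ¬ (b.2 = mm (f.map Prod.snd)))) =
            KK (mm (f.map Prod.snd)) (q+1)
              (g.filter (fun b => ¬ (b.2 = mm (f.map Prod.snd)))) := by
          rw [← hKf, ← hKg]; exact hKfg
        -- evaluate at c + u
        have hval := DFunLike.congr_fun hK1 (c + mm (f.map Prod.snd))
        unfold KK at hval
        rw [Finsupp.sub_apply, Finsupp.sub_apply] at hval
        have hzero : ∀ (F : Multiset (ℝ × ℝ)), IsBarcode F →
            (∀ s ∈ Multiset.powersetCard (q+1)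
              ((F.filter (fun b => ¬ (b.2 = mm (f.map Prod.snd)))).map Prod.fst),
              c ≤ s.sum) →
            (∀ x ∈ F.map Prod.snd, mm (f.map Prod.snd) ≤ x) →
            SS (Multiset.powersetCard (q+1)
                (F.filter (fun b => ¬ (b.2 = mm (f.map Prod.snd)))))
              (fun s => (s.map Prod.fst).sum + mm (s.map Prod.snd))
              (c + mm (f.map Prod.snd)) = 0 := by
          intro F _ hbd hup
          apply SS_apply_eq_zero
          intro s hs
          have hsum : c ≤ (s.map Prod.fst).sum := hbd _ (mem_pcard_map hs)
          have hmin : mm (f.map Prod.snd) < mm (s.map Prod.snd) := by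
            rw [Multiset.mem_powersetCard] at hs
            have hsne : s.map Prod.snd ≠ 0 := by
              simp only [ne_eq, Multiset.map_eq_zero]
              intro h0; rw [h0] at hs; simp at hs
            have hmem := mm_mem hsne
            rw [Multiset.mem_map] at hmem
            obtain ⟨bb, hbb, hbbeq⟩ := hmem
            have hbbF : bb ∈ F.filter (fun b => ¬ (b.2 = mm (f.map Prod.snd))) :=
              Multiset.mem_of_le hs.1 hbb
            have hne' : ¬ (bb.2 = mm (f.map Prod.snd)) := (Multiset.mem_filter.mp hbbF).2
            have hge : mm (f.map Prod.snd) ≤ bb.2 := by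
              apply hup
              exact Multiset.mem_map_of_mem _ (Multiset.mem_of_mem_filter hbbF)
            rw [← hbbeq]
            exact lt_of_le_of_ne hge (fun hh => hne' hh.symm)
          intro hcontra
          linarith
        have hzf := hzero f hf hb₁ huF
        have hzg := hzero g hg hb₂ huG
        rw [hzf, hzg] at hval
        -- identify the remaining terms with the counts
        have hcount : ∀ (F₁ : Multiset (ℝ × ℝ)),
            SS (Multiset.powersetCard (q+1) F₁)
              (fun s => (s.map Prod.fst).sum + mm (f.map Prod.snd))
              (c + mm (f.map Prod.snd)) =
            ((Multiset.powersetCard (q+1) (F₁.map Prod.fst)).filter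
              (fun s => s.sum = c)).card := by
          intro F₁
          rw [← SS_fst F₁, SS_apply]
          have hfe : (Multiset.powersetCard (q+1) (F₁.map Prod.fst)).filter
              (fun s => s.sum + mm (f.map Prod.snd) = c + mm (f.map Prod.snd)) =
              (Multiset.powersetCard (q+1) (F₁.map Prod.fst)).filter
              (fun s => s.sum = c) := by
            apply Multiset.filter_congr
            intro s _
            constructor
            · intro hh; linarith
            · intro hh; rw [hh]
          rw [hfe]
        rw [hcount, hcount] at hval
        simp only [zero_sub, neg_inj, Nat.cast_inj] at hval
        exact hval

end ECSaux

/-- the exterior critical series is a complete invariant of barcodes. -/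
theorem exteriorCriticalSeries_injective
    (f g : Multiset (ℝ × ℝ)) (hf : IsBarcode f) (hg : IsBarcode g)
    (h : ∀ p : ℕ, 1 ≤ p → critSeries (extPow f p) = critSeries (extPow g p)) :
    f = g :=
  ECSaux.main_induction (Multiset.card f) f g rfl hf hg h
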